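/- Let α ∈ (1/(3(2−√2)² + 1), 1). Then there exists n₀ ∈ ℕ such that for every β > 0, every integer n ≥ n₀, and every even function θ ∈ C²(ℝ; [0,1]) satisfying θ ≡ 1 on [−1,1], θ ≡ 0 outside [−√2, √2], θ'(r) ≤ 0 for r ≥ 0, and θ''(r) ≥ −(2/(√2−1)²)(1 + 1/n) for all r ∈ ℝ, there exists a constant C_{α,β,n} > 0 such that, defining c := √((1−α)/(1+β)) and W(x) := Σ_{k=1}^N θ(c x_k)·( −((1−α)/4) x_k⁴ + ((1+β)/2) x_k² ) − N/4, one has for every integer N ≥ 2, every x ∈ ℝ^N and every w ∈ ℝ^N: ⟨w, Hess(V + W)(x) w⟩ ≥ C_{α,β,n} ‖w‖². -/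

import Mathlib

open Real MeasureTheory Matrix Filter

noncomputable section

/-- The discrete Laplacian `K` as an `N × N` matrix:
`(Kx)_k = μ/(4 sin²(π/N)) (2 x_k − x_{k+1} − x_{k−1})` with periodic indices. -/
def Kdisc (μ : ℝ) (N : ℕ) : Matrix (Fin N) (Fin N) ℝ :=
  Matrix.of fun k l =>
    μ / (4 * Real.sin (Real.pi / N) ^ 2) *
      ((if l = k then 2 else 0) - (if (l : ℕ) = ((k : ℕ) + 1) % N then 1 else 0)
        - (if (l : ℕ) = ((k : ℕ) + (N - 1)) % N then 1 else 0))

/-- The energy `V(x) = (1/4)Σ x_k⁴ + (1/2)⟨x,(K−I)x⟩ + N/4`. -/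
def Venergy (μ : ℝ) (N : ℕ) (x : Fin N → ℝ) : ℝ :=
  (1 / 4) * ∑ k, x k ^ 4
    + (1 / 2) * ∑ k, x k * ((Kdisc μ N).mulVec x k - x k)
    + N / 4

/-- The `k`-th partial derivative `∂_k φ(x)`. -/
def pgrad (N : ℕ) (φ : (Fin N → ℝ) → ℝ) (x : Fin N → ℝ) (k : Fin N) : ℝ :=
  fderiv ℝ φ x (Pi.single k 1)

/-- Squared Euclidean norm of the gradient `|∇φ(x)|²`. -/
def gradSq (N : ℕ) (φ : (Fin N → ℝ) → ℝ) (x : Fin N → ℝ) : ℝ :=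
  ∑ k, pgrad N φ x k ^ 2

/-- The Laplacian `Δφ(x) = Σ_k ∂²_k φ(x)`. -/
def lapl (N : ℕ) (φ : (Fin N → ℝ) → ℝ) (x : Fin N → ℝ) : ℝ :=
  ∑ k, fderiv ℝ (fun y => pgrad N φ y k) x (Pi.single k 1)

/-- The Hessian quadratic form `⟨w, Hess φ(x) w⟩`. -/
def hessQF (N : ℕ) (φ : (Fin N → ℝ) → ℝ) (x w : Fin N → ℝ) : ℝ :=
  fderiv ℝ (fun y => fderiv ℝ φ y w) x w

/-- The orthogonal projection `P` onto the span of `(1,…,1)`, as a matrix. -/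
def Pmat (N : ℕ) : Matrix (Fin N) (Fin N) ℝ := Matrix.of fun _ _ => 1 / (N : ℝ)

/-- The unnormalised equilibrium density `e^{−V(x)/(hN)}`. -/
def dens (μ : ℝ) (N : ℕ) (h : ℝ) (x : Fin N → ℝ) : ℝ :=
  Real.exp (-(Venergy μ N x) / (h * N))

/-- The rescaled potential `f(x) = V(√N x)/(2N)` of the Witten Laplacian. -/
def fWit (μ : ℝ) (N : ℕ) (x : Fin N → ℝ) : ℝ :=
  Venergy μ N (fun k => Real.sqrt N * x k) / (2 * N)

/-- The quasimode `χ(x) = (2/√(2πh)) ∫₀^{x̄} e^{−t²/(2h)} dt`. -/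
def chiQ (N : ℕ) (h : ℝ) (x : Fin N → ℝ) : ℝ :=
  (2 / Real.sqrt (2 * Real.pi * h)) *
    ∫ t in (0:ℝ)..((1 / N) * ∑ j, x j), Real.exp (-t ^ 2 / (2 * h))

/-- The matrix `αP + K + βI`. -/
def Mαβ (μ α β : ℝ) (N : ℕ) : Matrix (Fin N) (Fin N) ℝ :=
  α • Pmat N + Kdisc μ N + β • (1 : Matrix (Fin N) (Fin N) ℝ)

/-- The covariance matrix `Q = (αP + K + βI)⁻¹`. -/
def Qmat (μ α β : ℝ) (N : ℕ) : Matrix (Fin N) (Fin N) ℝ := (Mαβ μ α β N)⁻¹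

/-- The generator `L_h φ = −hNΔφ + ∇V·∇φ`. -/
def Lop (μ : ℝ) (N : ℕ) (h : ℝ) (φ : (Fin N → ℝ) → ℝ) (x : Fin N → ℝ) : ℝ :=
  -(h * N) * lapl N φ x + ∑ k, pgrad N (Venergy μ N) x k * pgrad N φ x k

end


set_option maxHeartbeats 1000000

noncomputable section ConvexHelpers

def gfun (θ : ℝ → ℝ) (c a b t : ℝ) : ℝ :=
  (1/4)*t^4 - (1/2)*t^2 + θ (c*t) * (-a*t^4 + b*t^2)
def gfun' (θ : ℝ → ℝ) (c a b t : ℝ) : ℝ :=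
  t^3 - t + (deriv θ (c*t) * c) * (-a*t^4 + b*t^2) + θ (c*t) * (-(4*a)*t^3 + 2*b*t)
def gfun'' (θ : ℝ → ℝ) (c a b t : ℝ) : ℝ :=
  3*t^2 - 1 + (deriv (deriv θ) (c*t) * c^2) * (-a*t^4 + b*t^2)
    + 2*(deriv θ (c*t) * c)*(-(4*a)*t^3 + 2*b*t) + θ (c*t) * (-(12*a)*t^2 + 2*b)

lemma hasDerivAt_gfun (θ : ℝ → ℝ) (hθ : ContDiff ℝ 2 θ) (c a b t : ℝ) :
    HasDerivAt (gfun θ c a b) (gfun' θ c a b t) t := by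
  have hθd : Differentiable ℝ θ := hθ.differentiable (by norm_num)
  have hct : HasDerivAt (fun s : ℝ => c*s) c t := by simpa using (hasDerivAt_id t).const_mul c
  have h1 : HasDerivAt (fun t : ℝ => θ (c*t)) (deriv θ (c*t) * c) t :=
    ((hθd (c*t)).hasDerivAt).comp t hct
  have h2 : HasDerivAt (fun t : ℝ => -a*t^4 + b*t^2) (-(4*a)*t^3 + 2*b*t) t := by
    have := (((hasDerivAt_pow 4 t).const_mul (-a)).fun_add ((hasDerivAt_pow 2 t).const_mul b))
    refine this.congr_deriv ?_; push_cast; ring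
  have h3 : HasDerivAt (fun t : ℝ => (1/4)*t^4 - (1/2)*t^2) (t^3 - t) t := by
    have := (((hasDerivAt_pow 4 t).const_mul ((1:ℝ)/4)).fun_sub ((hasDerivAt_pow 2 t).const_mul ((1:ℝ)/2)))
    refine this.congr_deriv ?_; push_cast; ring
  have h := h3.fun_add (h1.fun_mul h2)
  unfold gfun gfun'
  exact h.congr_deriv (by ring)

lemma hasDerivAt_gfun' (θ : ℝ → ℝ) (hθ : ContDiff ℝ 2 θ) (c a b t : ℝ) :
    HasDerivAt (gfun' θ c a b) (gfun'' θ c a b t) t := by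
  have hθd : Differentiable ℝ θ := hθ.differentiable (by norm_num)
  have hθd2 : Differentiable ℝ (deriv θ) :=
    ((contDiff_succ_iff_deriv.mp (by exact_mod_cast hθ : ContDiff ℝ ((1:ℕ)+1) θ)).2.2).differentiable (by norm_num)
  have hct : HasDerivAt (fun s : ℝ => c*s) c t := by simpa using (hasDerivAt_id t).const_mul c
  have h1 : HasDerivAt (fun t : ℝ => θ (c*t)) (deriv θ (c*t) * c) t :=
    ((hθd (c*t)).hasDerivAt).comp t hct
  have h1' : HasDerivAt (fun t : ℝ => deriv θ (c*t)) (deriv (deriv θ) (c*t) * c) t :=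
    ((hθd2 (c*t)).hasDerivAt).comp t hct
  have h2 : HasDerivAt (fun t : ℝ => -a*t^4 + b*t^2) (-(4*a)*t^3 + 2*b*t) t := by
    have := (((hasDerivAt_pow 4 t).const_mul (-a)).fun_add ((hasDerivAt_pow 2 t).const_mul b))
    refine this.congr_deriv ?_; push_cast; ring
  have h2' : HasDerivAt (fun t : ℝ => -(4*a)*t^3 + 2*b*t) (-(12*a)*t^2 + 2*b) t := by
    have := (((hasDerivAt_pow 3 t).const_mul (-(4*a))).fun_add (((hasDerivAt_id t)).const_mul (2*b)))
    refine this.congr_deriv ?_; push_cast; ring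
  have h3 : HasDerivAt (fun t : ℝ => t^3 - t) (3*t^2 - 1) t := by
    have := ((hasDerivAt_pow 3 t).fun_sub (hasDerivAt_id t))
    norm_num at this; convert this using 1
  have h := (h3.fun_add ((h1'.mul_const c).fun_mul h2)).fun_add (h1.fun_mul h2')
  unfold gfun' gfun''
  exact h.congr_deriv (by ring)

noncomputable abbrev prj (N : ℕ) (k : Fin N) : (Fin N → ℝ) →L[ℝ] ℝ :=
  ContinuousLinearMap.proj (R := ℝ) (φ := fun _ : Fin N => ℝ) k

lemma hessQF_eq (μ : ℝ) (N : ℕ) (θ : ℝ → ℝ) (hθ : ContDiff ℝ 2 θ) (c a b : ℝ)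
    (x w : Fin N → ℝ) :
    hessQF N (fun y => Venergy μ N y +
        ((∑ k, θ (c * y k) * (-a * y k ^ 4 + b * y k ^ 2)) - N / 4)) x w
      = ∑ k, gfun'' θ c a b (x k) * w k ^ 2 + ∑ k, w k * (Kdisc μ N).mulVec w k := by
  classical
  set Lk : Fin N → (Fin N → ℝ) →L[ℝ] ℝ :=
    fun k => ∑ l, (Kdisc μ N) k l • prj N l with hLkdef
  have hLk : ∀ (k : Fin N) (y : Fin N → ℝ), (Kdisc μ N).mulVec y k = Lk k y := by
    intro k y
    simp [hLkdef, Matrix.mulVec, dotProduct, ContinuousLinearMap.sum_apply,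
      ContinuousLinearMap.smul_apply, ContinuousLinearMap.proj_apply, smul_eq_mul]
  have hfun : (fun y => Venergy μ N y +
        ((∑ k, θ (c * y k) * (-a * y k ^ 4 + b * y k ^ 2)) - (N:ℝ) / 4))
      = fun y => (∑ k, gfun θ c a b (y k)) + (1/2) * ∑ k, y k * Lk k y := by
    funext y
    have e1 : ∑ k, y k * ((Kdisc μ N).mulVec y k - y k)
        = ∑ k, y k * Lk k y - ∑ k, y k ^ 2 := by
      rw [← Finset.sum_sub_distrib]
      exact Finset.sum_congr rfl (fun k _ => by rw [← hLk]; ring)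
    have e2 : ∑ k, gfun θ c a b (y k)
        = (1/4) * (∑ k, (y k)^4) - (1/2) * (∑ k, (y k)^2)
          + ∑ k, θ (c * y k) * (-a * y k ^ 4 + b * y k ^ 2) := by
      rw [Finset.mul_sum, Finset.mul_sum, ← Finset.sum_sub_distrib, ← Finset.sum_add_distrib]
      exact Finset.sum_congr rfl (fun k _ => by simp [gfun])
    simp only [Venergy, e1, e2]
    ring
  rw [hfun]
  have hD : ∀ y : Fin N → ℝ, HasFDerivAt
      (fun y => (∑ k, gfun θ c a b (y k)) + (1/2) * ∑ k, y k * Lk k y)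
      ((∑ k, gfun' θ c a b (y k) • prj N k)
        + (1/2 : ℝ) • (∑ k, (y k • Lk k + (Lk k y) • prj N k))) y := by
    intro y
    have p1 : HasFDerivAt (fun y : Fin N → ℝ => ∑ k, gfun θ c a b (y k))
        (∑ k, gfun' θ c a b (y k) • prj N k) y :=
      HasFDerivAt.fun_sum (fun k _ =>
        (hasDerivAt_gfun θ hθ c a b (y k)).comp_hasFDerivAt (f := (prj N k : (Fin N → ℝ) → ℝ)) y (prj N k).hasFDerivAt)
    have p2 : HasFDerivAt (fun y : Fin N → ℝ => ∑ k, y k * Lk k y)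
        (∑ k, (y k • Lk k + (Lk k y) • prj N k)) y :=
      HasFDerivAt.fun_sum (fun k _ =>
        (((prj N k).hasFDerivAt (x := y)).fun_mul ((Lk k).hasFDerivAt)))
    exact p1.fun_add (p2.const_mul (1/2))
  have hfd : (fun y => fderiv ℝ
      (fun y => (∑ k, gfun θ c a b (y k)) + (1/2) * ∑ k, y k * Lk k y) y w)
      = fun y => (∑ k, gfun' θ c a b (y k) * w k)
          + (1/2) * (∑ k, (y k * Lk k w + Lk k y * w k)) := by
    funext y
    rw [(hD y).fderiv]
    simp [ContinuousLinearMap.sum_apply, ContinuousLinearMap.smul_apply,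
      ContinuousLinearMap.proj_apply, smul_eq_mul, Finset.mul_sum]
  rw [hessQF, hfd]
  have q1 : HasFDerivAt (fun y : Fin N → ℝ => ∑ k, gfun' θ c a b (y k) * w k)
      (∑ k, w k • (gfun'' θ c a b (x k) • prj N k)) x :=
    HasFDerivAt.fun_sum (fun k _ =>
      ((hasDerivAt_gfun' θ hθ c a b (x k)).comp_hasFDerivAt (f := (prj N k : (Fin N → ℝ) → ℝ)) x
        (prj N k).hasFDerivAt).mul_const (w k))
  have q2 : HasFDerivAt (fun y : Fin N → ℝ => ∑ k, (y k * Lk k w + Lk k y * w k))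
      (∑ k, ((Lk k w) • prj N k + w k • Lk k)) x :=
    HasFDerivAt.fun_sum (fun k _ =>
      (((prj N k).hasFDerivAt (x := x)).mul_const (Lk k w)).fun_add
        ((Lk k).hasFDerivAt.mul_const (w k)))
  rw [(q1.fun_add (q2.const_mul (1/2))).fderiv]
  simp only [ContinuousLinearMap.add_apply, ContinuousLinearMap.sum_apply,
    ContinuousLinearMap.smul_apply, ContinuousLinearMap.proj_apply, smul_eq_mul,
    Finset.mul_sum]
  congr 1
  · exact Finset.sum_congr rfl (fun k _ => by ring)
  · exact Finset.sum_congr rfl (fun k _ => by rw [hLk]; ring)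

lemma Kdisc_mulVec' {N : ℕ} [NeZero N] (hN : 2 ≤ N) (μ : ℝ) (w : Fin N → ℝ) (k : Fin N) :
    (Kdisc μ N).mulVec w k =
      μ / (4 * Real.sin (Real.pi / N) ^ 2) * (2 * w k - w (k + 1) - w (k - 1)) := by
  have hone : ((1 : Fin N) : ℕ) = 1 := by
    rw [Fin.val_one']; exact Nat.mod_eq_of_lt (by omega)
  have h1 : ∀ l : Fin N, ((l : ℕ) = ((k : ℕ) + 1) % N) ↔ l = k + 1 := by
    intro l; rw [Fin.ext_iff, Fin.add_def, hone]
  have h2 : ∀ l : Fin N, ((l : ℕ) = ((k : ℕ) + (N - 1)) % N) ↔ l = k - 1 := by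
    intro l; rw [Fin.ext_iff, Fin.sub_def, hone, Nat.add_comm]
  simp only [Kdisc, Matrix.mulVec, dotProduct, Matrix.of_apply]
  simp_rw [h1, h2]
  have expand : ∀ l : Fin N, μ / (4 * Real.sin (Real.pi / N) ^ 2) *
      (((if l = k then (2:ℝ) else 0) - if l = k + 1 then 1 else 0)
        - if l = k - 1 then 1 else 0) * w l
      = μ / (4 * Real.sin (Real.pi / N) ^ 2) *
        (2 * (if l = k then w l else 0) - (if l = k + 1 then w l else 0)
          - (if l = k - 1 then w l else 0)) := by
    intro l; split_ifs <;> ring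
  rw [Finset.sum_congr rfl (fun l _ => expand l), ← Finset.mul_sum]
  congr 1
  rw [Finset.sum_sub_distrib, Finset.sum_sub_distrib, ← Finset.mul_sum]
  simp [Finset.sum_ite_eq']

lemma Kdisc_psd {N : ℕ} [NeZero N] (hN : 2 ≤ N) {μ : ℝ} (hμ : 0 ≤ μ) (w : Fin N → ℝ) :
    0 ≤ ∑ k, w k * (Kdisc μ N).mulVec w k := by
  have e1 : ∑ k : Fin N, w (k + 1) * w k = ∑ k : Fin N, w k * w (k - 1) :=
    Fintype.sum_equiv (Equiv.addRight (1 : Fin N)) _ _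
      (fun k => by simp [add_sub_cancel_right])
  have e2 : ∑ k : Fin N, w (k + 1) ^ 2 = ∑ k : Fin N, w k ^ 2 :=
    Fintype.sum_equiv (Equiv.addRight (1 : Fin N)) _ _ (fun k => rfl)
  have key : ∑ k : Fin N, w k * (2 * w k - w (k + 1) - w (k - 1))
      = ∑ k : Fin N, (w k - w (k + 1)) ^ 2 := by
    rw [← sub_eq_zero, ← Finset.sum_sub_distrib]
    have h : ∀ k : Fin N, w k * (2 * w k - w (k + 1) - w (k - 1)) - (w k - w (k + 1)) ^ 2
        = (w k ^ 2 - w (k + 1) ^ 2) + (w k * w (k + 1) - w k * w (k - 1)) := fun k => by ring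
    rw [Finset.sum_congr rfl (fun k _ => h k), Finset.sum_add_distrib,
      Finset.sum_sub_distrib, Finset.sum_sub_distrib, e2, ← e1]
    have : ∑ k : Fin N, w k * w (k + 1) = ∑ k : Fin N, w (k + 1) * w k :=
      Finset.sum_congr rfl (fun k _ => mul_comm _ _)
    rw [this]; ring
  have hd : 0 ≤ μ / (4 * Real.sin (Real.pi / N) ^ 2) := div_nonneg hμ (by positivity)
  calc (0:ℝ) ≤ μ / (4 * Real.sin (Real.pi / N) ^ 2) * ∑ k : Fin N, (w k - w (k + 1)) ^ 2 :=
        mul_nonneg hd (Finset.sum_nonneg fun k _ => sq_nonneg _)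
    _ = ∑ k, w k * (Kdisc μ N).mulVec w k := by
        rw [← key, Finset.mul_sum]
        exact Finset.sum_congr rfl fun k _ => by rw [Kdisc_mulVec' hN]; ring

lemma deriv_zero_of_locally_const {θ : ℝ → ℝ} {U : Set ℝ} (hU : IsOpen U) {v : ℝ}
    (hconst : ∀ r ∈ U, θ r = v) {s : ℝ} (hs : s ∈ U) :
    deriv θ s = 0 ∧ deriv (deriv θ) s = 0 := by
  have hev : θ =ᶠ[nhds s] fun _ => v :=
    Filter.eventually_of_mem (hU.mem_nhds hs) hconst
  have hevd : deriv θ =ᶠ[nhds s] deriv (fun _ : ℝ => v) := hev.deriv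
  have h1 : deriv θ =ᶠ[nhds s] fun _ => 0 := by
    filter_upwards [hevd] with r hr; simpa using hr
  have h2 : deriv (deriv θ) =ᶠ[nhds s] deriv (fun _ : ℝ => (0:ℝ)) := h1.deriv
  refine ⟨h1.self_of_nhds, ?_⟩
  have := h2.self_of_nhds; simpa using this

lemma gfun''_lb (θ : ℝ → ℝ)
    (hθ01 : ∀ r, θ r ∈ Set.Icc (0:ℝ) 1) (hsym : ∀ r, θ (-r) = θ r)
    (hin : ∀ r : ℝ, |r| ≤ 1 → θ r = 1) (hout : ∀ r : ℝ, Real.sqrt 2 ≤ |r| → θ r = 0)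
    (hmono : ∀ r : ℝ, 0 ≤ r → deriv θ r ≤ 0)
    (κ α β : ℝ) (hκ0 : 0 ≤ κ) (hlb : ∀ r, -κ ≤ deriv (deriv θ) r)
    (hα0 : 0 < α) (hα2 : α < 1) (hβ : 0 < β) (hκα : κ * (1 - α) ≤ 12 * α) (t : ℝ) :
    min β 1 ≤ gfun'' θ (Real.sqrt ((1-α)/(1+β))) ((1-α)/4) ((1+β)/2) t := by
  obtain ⟨P, hPdef⟩ : ∃ x : ℝ, x = 1 - α := ⟨_, rfl⟩
  obtain ⟨Q, hQdef⟩ : ∃ x : ℝ, x = 1 + β := ⟨_, rfl⟩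
  rw [← hPdef] at hκα ⊢
  rw [← hQdef]
  obtain ⟨c, hcdef⟩ : ∃ x : ℝ, x = Real.sqrt (P/Q) := ⟨_, rfl⟩
  rw [← hcdef]
  have hP : 0 < P := by rw [hPdef]; linarith
  have hP1 : P < 1 := by rw [hPdef]; linarith
  have hQ : 1 < Q := by rw [hQdef]; linarith
  have hQ0 : 0 < Q := by linarith
  have hc2 : c^2 = P/Q := by rw [hcdef]; exact Real.sq_sqrt (by positivity)
  have hc0 : 0 < c := by rw [hcdef]; exact Real.sqrt_pos.mpr (by positivity)
  have hodd : ∀ r : ℝ, deriv θ (-r) = -deriv θ r := by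
    intro r
    have hfun : (fun x : ℝ => θ (-x)) = θ := funext hsym
    have := deriv_comp_neg θ r
    rw [hfun] at this
    linarith
  have sqrt2_pos : (0:ℝ) < Real.sqrt 2 := by positivity
  have hs2 : (Real.sqrt 2)^2 = 2 := Real.sq_sqrt (by norm_num)
  rcases lt_or_ge (|c*t|) 1 with hA | h1
  · have hz := deriv_zero_of_locally_const (U := {r : ℝ | |r| < 1})
      (isOpen_lt continuous_abs continuous_const)
      (fun r hr => hin r (le_of_lt hr)) hA
    have hθ1 : θ (c*t) = 1 := hin _ (le_of_lt hA)
    rw [gfun'', hz.1, hz.2, hθ1]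
    have hmin : min β 1 ≤ β := min_le_left _ _
    have h1P : 0 ≤ (1-P) * t^2 := mul_nonneg (by linarith) (sq_nonneg t)
    linarith [sq_nonneg t]
  rcases le_or_gt (|c*t|) (Real.sqrt 2) with h2 | hB
  swap
  · have hz := deriv_zero_of_locally_const (U := {r : ℝ | Real.sqrt 2 < |r|})
      (isOpen_lt continuous_const continuous_abs)
      (fun r hr => hout r (le_of_lt hr)) hB
    have hθ0 : θ (c*t) = 0 := hout _ (le_of_lt hB)
    rw [gfun'', hz.1, hz.2, hθ0]
    have hct2 : 2 < c^2 * t^2 := by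
      nlinarith [sq_abs (c*t), abs_nonneg (c*t), hs2, sqrt2_pos]
    have ht2 : 2 < t^2 := by
      rw [hc2] at hct2
      have hr1 : P/Q ≤ 1 := by rw [div_le_one hQ0]; linarith
      nlinarith [mul_nonneg (by linarith : (0:ℝ) ≤ 1 - P/Q) (sq_nonneg t)]
    have hmin : min β 1 ≤ 1 := min_le_right _ _
    linarith
  · have h1S : 1 ≤ c^2 * t^2 := by
      nlinarith [sq_abs (c*t), abs_nonneg (c*t)]
    have hS2 : c^2 * t^2 ≤ 2 := by
      nlinarith [sq_abs (c*t), abs_nonneg (c*t), hs2, sqrt2_pos]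
    have hT : P * t^2 = (c^2*t^2) * Q := by
      rw [hc2]; field_simp
    have hS0 : (0:ℝ) ≤ c^2*t^2 := by positivity
    have hcu : 0 ≤ c^2*t^2*Q*(2-c^2*t^2)/4 := by
      have h := mul_nonneg (mul_nonneg hS0 (by linarith : (0:ℝ) ≤ 2 - c^2*t^2)) hQ0.le
      linarith [h]
    have hT1 : -κ * (c^2*t^2*Q*(2-c^2*t^2)/4)
        ≤ (deriv (deriv θ) (c*t) * c^2) * (-(P/4)*t^4 + Q/2*t^2) := by
      have e : (deriv (deriv θ) (c*t) * c^2) * (-(P/4)*t^4 + Q/2*t^2)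
          = deriv (deriv θ) (c*t) * (c^2*t^2*Q*(2-c^2*t^2)/4) := by
        have hu : c^2 * (-(P/4)*t^4 + Q/2*t^2) = c^2*t^2 * Q * (2 - c^2*t^2) / 4 := by
          linear_combination (-(c^2*t^2)/4) * hT
        rw [← hu]; ring
      rw [e]
      exact mul_le_mul_of_nonneg_right (hlb _) hcu
    have hQP : Q ≤ P*t^2 := by
      have h := mul_nonneg (by linarith : (0:ℝ) ≤ c^2*t^2 - 1) hQ0.le
      nlinarith [hT]
    have hT2 : 0 ≤ 2*(deriv θ (c*t) * c)*(-(4*(P/4))*t^3 + 2*(Q/2)*t) := by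
      have efac : -(4*(P/4))*t^3 + 2*(Q/2)*t = t*(Q - P*t^2) := by ring
      rw [efac]
      rcases le_or_gt 0 t with ht | ht
      · have hd : deriv θ (c*t) ≤ 0 := hmono _ (by positivity)
        have hfact : t*(Q - P*t^2) ≤ 0 := by
          nlinarith [mul_nonneg ht (by linarith : (0:ℝ) ≤ P*t^2 - Q)]
        have h := mul_nonneg (mul_nonneg (by norm_num : (0:ℝ) ≤ 2) hc0.le)
          (mul_nonneg (neg_nonneg.mpr hd) (neg_nonneg.mpr hfact))
        nlinarith [h]
      · have hd : 0 ≤ deriv θ (c*t) := by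
          have h1' : deriv θ (c*(-t)) ≤ 0 := hmono _ (by nlinarith)
          have h2' := hodd (c*(-t))
          have he : -(c*(-t)) = c*t := by ring
          rw [he] at h2'
          linarith
        have hfact : 0 ≤ t*(Q - P*t^2) := by
          nlinarith [mul_nonneg (by linarith : (0:ℝ) ≤ -t)
            (by linarith : (0:ℝ) ≤ P*t^2 - Q)]
        have h := mul_nonneg (mul_nonneg (by norm_num : (0:ℝ) ≤ 2) hc0.le)
          (mul_nonneg hd hfact)
        nlinarith [h]
    have hT3 : Q*(1-3*(c^2*t^2)) ≤ θ (c*t) * (-(12*(P/4))*t^2 + 2*(Q/2)) := by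
      have e3 : -(12*(P/4))*t^2 + 2*(Q/2) = Q*(1-3*(c^2*t^2)) := by
        linear_combination (-3)*hT
      rw [e3]
      have hfneg : Q*(1-3*(c^2*t^2)) ≤ 0 := by nlinarith
      nlinarith [(hθ01 (c*t)).1, (hθ01 (c*t)).2, hfneg]
    have hSQ : 0 ≤ c^2*t^2*Q := mul_nonneg hS0 hQ0.le
    have key : P*κ*(c^2*t^2*Q*(2-c^2*t^2)/4) ≤ 3*(1-P)*(c^2*t^2*Q) := by
      have hA' := mul_nonneg (mul_nonneg (mul_nonneg hP.le hκ0) hSQ)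
        (by linarith : (0:ℝ) ≤ c^2*t^2 - 1)
      have hB' := mul_nonneg (by linarith : (0:ℝ) ≤ 12*(1-P) - κ*P) hSQ
      linarith [hA', hB']
    have hE : 0 ≤ 3*t^2 - κ*(c^2*t^2*Q*(2-c^2*t^2)/4) - 3*(c^2*t^2*Q) := by
      have hPE : 0 ≤ P * (3*t^2 - κ*(c^2*t^2*Q*(2-c^2*t^2)/4) - 3*(c^2*t^2*Q)) := by
        nlinarith [key, hT]
      nlinarith [hPE, hP]
    have hmin : min β 1 ≤ β := min_le_left _ _
    rw [gfun'']
    linarith [hT1, hT2, hT3, hE]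

end ConvexHelpers

/-- convexification of `V` by a bounded perturbation `W`: for
`α ∈ (1/(3(2−√2)²+1), 1)` there is `n₀` such that for every `β > 0`, `n ≥ n₀`
and every admissible cut-off `θ`, the function `V + W` is uniformly convex,
where `W(x) = Σ_k θ(c x_k)(−((1−α)/4)x_k⁴ + ((1+β)/2)x_k²) − N/4` and
`c = √((1−α)/(1+β))`. -/
theorem convexification (μ : ℝ) (hμ : 1 < μ) (α : ℝ)
    (hα1 : 1 / (3 * (2 - Real.sqrt 2) ^ 2 + 1) < α) (hα2 : α < 1) :
    ∃ n₀ : ℕ, ∀ β : ℝ, 0 < β → ∀ n : ℕ, n₀ ≤ n →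
      ∀ θ : ℝ → ℝ, ContDiff ℝ 2 θ → (∀ r, θ r ∈ Set.Icc (0 : ℝ) 1) →
        (∀ r, θ (-r) = θ r) →
        (∀ r : ℝ, |r| ≤ 1 → θ r = 1) →
        (∀ r : ℝ, Real.sqrt 2 ≤ |r| → θ r = 0) →
        (∀ r : ℝ, 0 ≤ r → deriv θ r ≤ 0) →
        (∀ r : ℝ, -(2 / (Real.sqrt 2 - 1) ^ 2) * (1 + 1 / (n : ℝ)) ≤ iteratedDeriv 2 θ r) →
        ∃ C : ℝ, 0 < C ∧ ∀ N : ℕ, 2 ≤ N → ∀ x w : Fin N → ℝ,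
          C * ∑ k, w k ^ 2 ≤
            hessQF N (fun y => Venergy μ N y +
              ((∑ k, θ (Real.sqrt ((1 - α) / (1 + β)) * y k) *
                  (-((1 - α) / 4) * y k ^ 4 + ((1 + β) / 2) * y k ^ 2)) - N / 4)) x w := by
  have sqrt2_pos : (0:ℝ) < Real.sqrt 2 := by positivity
  have hs2 : (Real.sqrt 2)^2 = 2 := Real.sq_sqrt (by norm_num)
  have hs1 : 1 < Real.sqrt 2 := by nlinarith
  have he : (0:ℝ) < (Real.sqrt 2 - 1)^2 := by
    have : (0:ℝ) < Real.sqrt 2 - 1 := by linarith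
    positivity
  have hD : (0:ℝ) < 3*(2 - Real.sqrt 2)^2 + 1 := by positivity
  have hα0 : 0 < α := lt_trans (by positivity) hα1
  have hgap : 1 - α < 6*α*(Real.sqrt 2 - 1)^2 := by
    have h1 : 1 < α * (3*(2 - Real.sqrt 2)^2 + 1) := (div_lt_iff₀ hD).mp hα1
    have heq : α*(3*(2 - Real.sqrt 2)^2+1) = 6*α*(Real.sqrt 2 - 1)^2 + α := by
      linear_combination (-3*α)*hs2
    linarith
  have hpos : 0 < 6*α*(Real.sqrt 2 - 1)^2 - (1-α) := by linarith
  obtain ⟨m, hm⟩ := exists_nat_gt ((1-α) / (6*α*(Real.sqrt 2 - 1)^2 - (1-α)))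
  refine ⟨m+1, ?_⟩
  intro β hβ n hn θ hθ hθ01 hsym hin hout hmono hlb2
  have hncast : (m:ℝ)+1 ≤ n := by exact_mod_cast hn
  have hn0 : (0:ℝ) < n := by
    have := Nat.cast_nonneg (α := ℝ) m
    linarith
  have hstep : (1-α)/(n:ℝ) < 6*α*(Real.sqrt 2 - 1)^2 - (1-α) := by
    rw [div_lt_iff₀ hn0]
    have h3 : (1-α)/(6*α*(Real.sqrt 2 - 1)^2-(1-α)) < (n:ℝ) := by linarith
    have h4 := (div_lt_iff₀ hpos).mp h3
    linarith [mul_comm (6*α*(Real.sqrt 2 - 1)^2 - (1-α)) ((n:ℝ))]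
  have hκα : (2/(Real.sqrt 2 - 1)^2*(1+1/(n:ℝ))) * (1-α) ≤ 12*α := by
    have h6 : (1+1/(n:ℝ))*(1-α) ≤ 6*α*(Real.sqrt 2 - 1)^2 := by
      have e : (1+1/(n:ℝ))*(1-α) = (1-α) + (1-α)/(n:ℝ) := by ring
      rw [e]; linarith
    calc (2/(Real.sqrt 2 - 1)^2*(1+1/(n:ℝ)))*(1-α)
        = (2/(Real.sqrt 2 - 1)^2) * ((1+1/(n:ℝ))*(1-α)) := by ring
      _ ≤ (2/(Real.sqrt 2 - 1)^2) * (6*α*(Real.sqrt 2 - 1)^2) :=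
          mul_le_mul_of_nonneg_left h6 (by positivity)
      _ = 12*α := by
          have h' : Real.sqrt 2 - 1 ≠ 0 := by linarith
          field_simp; ring
  have hκ0 : 0 ≤ 2/(Real.sqrt 2 - 1)^2*(1+1/(n:ℝ)) := by positivity
  have hlb' : ∀ r, -(2/(Real.sqrt 2 - 1)^2*(1+1/(n:ℝ))) ≤ deriv (deriv θ) r := by
    intro r
    have h := hlb2 r
    rw [show iteratedDeriv 2 θ = deriv (deriv θ) from by
      rw [iteratedDeriv_succ, iteratedDeriv_one]] at h
    linarith
  refine ⟨min β 1, lt_min hβ one_pos, ?_⟩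
  intro N hN x w
  haveI : NeZero N := ⟨by omega⟩
  rw [hessQF_eq μ N θ hθ (Real.sqrt ((1-α)/(1+β))) ((1-α)/4) ((1+β)/2) x w]
  have hK := Kdisc_psd hN (le_of_lt (lt_trans zero_lt_one hμ)) w
  have hterm : ∀ k : Fin N, min β 1 * w k ^ 2
      ≤ gfun'' θ (Real.sqrt ((1-α)/(1+β))) ((1-α)/4) ((1+β)/2) (x k) * w k ^ 2 := fun k =>
    mul_le_mul_of_nonneg_right
      (gfun''_lb θ hθ01 hsym hin hout hmono _ α β hκ0 hlb' hα0 hα2 hβ hκα (x k))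
      (sq_nonneg _)
  calc min β 1 * ∑ k, w k ^ 2 = ∑ k, min β 1 * w k ^ 2 := Finset.mul_sum _ _ _
    _ ≤ ∑ k, gfun'' θ (Real.sqrt ((1-α)/(1+β))) ((1-α)/4) ((1+β)/2) (x k) * w k ^ 2 :=
        Finset.sum_le_sum (fun k _ => hterm k)
    _ ≤ _ := le_add_of_nonneg_right hK
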